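/- Consider the Lie algebra L_{9,58} = sl(2,R) ⋉_{D_1 ⊕ D_{1/2} ⊕ D_0} (h_1 ⊕ 3L_1) with nonzero brackets [X_1,X_2]=2X_2, [X_1,X_3]=−2X_3, [X_2,X_3]=X_1, [X_1,X_4]=2X_4, [X_1,X_6]=−2X_6, [X_1,X_7]=X_7, [X_1,X_8]=−X_8, [X_2,X_5]=2X_4, [X_2,X_6]=X_5, [X_2,X_8]=X_7, [X_3,X_4]=X_5, [X_3,X_5]=2X_6, [X_3,X_7]=X_8, [X_7,X_8]=X_9. Then the functions I_1 = x_9, I_2 = x_5² − 4 x_4 x_6, I_3 = x_1 x_5 x_9 − x_4 x_8² − x_6 x_7² + x_5 x_7 x_8 + 2 x_9 (x_2 x_6 − x_3 x_4) satisfy \hat{X}_i(I_m) = 0 for all i = 1,...,9 and m = 1,2,3. -/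

import Mathlib

open Finset

noncomputable def Xhat (C : Fin 9 → Fin 9 → Fin 9 → ℝ) (i : Fin 9)
    (F : (Fin 9 → ℝ) → ℝ) : (Fin 9 → ℝ) → ℝ :=
  fun x => ∑ j : Fin 9, (∑ k : Fin 9, C i j k * x k) * fderiv ℝ F x (Pi.single j 1)

noncomputable def Lhalf : Fin 9 → Fin 9 → Fin 9 → ℝ := fun i j k =>
  if (i, j, k) = ((0 : Fin 9), (1 : Fin 9), (1 : Fin 9)) then (2 : ℝ) else
  if (i, j, k) = ((0 : Fin 9), (2 : Fin 9), (2 : Fin 9)) then (-2 : ℝ) else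
  if (i, j, k) = ((1 : Fin 9), (2 : Fin 9), (0 : Fin 9)) then (1 : ℝ) else
  if (i, j, k) = ((0 : Fin 9), (3 : Fin 9), (3 : Fin 9)) then (2 : ℝ) else
  if (i, j, k) = ((0 : Fin 9), (5 : Fin 9), (5 : Fin 9)) then (-2 : ℝ) else
  if (i, j, k) = ((0 : Fin 9), (6 : Fin 9), (6 : Fin 9)) then (1 : ℝ) else
  if (i, j, k) = ((0 : Fin 9), (7 : Fin 9), (7 : Fin 9)) then (-1 : ℝ) else
  if (i, j, k) = ((1 : Fin 9), (4 : Fin 9), (3 : Fin 9)) then (2 : ℝ) else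
  if (i, j, k) = ((1 : Fin 9), (5 : Fin 9), (4 : Fin 9)) then (1 : ℝ) else
  if (i, j, k) = ((1 : Fin 9), (7 : Fin 9), (6 : Fin 9)) then (1 : ℝ) else
  if (i, j, k) = ((2 : Fin 9), (3 : Fin 9), (4 : Fin 9)) then (1 : ℝ) else
  if (i, j, k) = ((2 : Fin 9), (4 : Fin 9), (5 : Fin 9)) then (2 : ℝ) else
  if (i, j, k) = ((2 : Fin 9), (6 : Fin 9), (7 : Fin 9)) then (1 : ℝ) else
  if (i, j, k) = ((6 : Fin 9), (7 : Fin 9), (8 : Fin 9)) then (1 : ℝ) else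
  0

noncomputable def C (i j k : Fin 9) : ℝ := Lhalf i j k - Lhalf j i k

noncomputable def I₁ : (Fin 9 → ℝ) → ℝ := fun x => x 8
noncomputable def I₂ : (Fin 9 → ℝ) → ℝ := fun x => (x 4)^2 - 4 * x 3 * x 5
noncomputable def I₃ : (Fin 9 → ℝ) → ℝ :=
  fun x => x 0 * x 4 * x 8 - x 3 * (x 7)^2 - x 5 * (x 6)^2 + x 4 * x 6 * x 7
    + 2 * x 8 * (x 1 * x 5 - x 2 * x 3)


lemma hp (j : Fin 9) (x : Fin 9 → ℝ) :
    HasFDerivAt (fun x : Fin 9 → ℝ => x j)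
      (ContinuousLinearMap.proj j : (Fin 9 → ℝ) →L[ℝ] ℝ) x :=
  (ContinuousLinearMap.proj j : (Fin 9 → ℝ) →L[ℝ] ℝ).hasFDerivAt

lemma d1 (x v : Fin 9 → ℝ) : fderiv ℝ I₁ x v = v 8 := by
  have h := hp 8 x
  rw [show I₁ = fun x : Fin 9 → ℝ => x 8 from rfl, h.fderiv]
  simp

lemma d2 (x v : Fin 9 → ℝ) :
    fderiv ℝ I₂ x v = 2 * x 4 * v 4 - 4 * (v 3 * x 5 + x 3 * v 5) := by
  have hfun : I₂ = fun x : Fin 9 → ℝ => x 4 * x 4 - (4 * x 3) * x 5 := by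
    funext y; simp [I₂]; ring
  rw [hfun]
  have h := ((hp 4 x).mul (hp 4 x)).sub (((hp 3 x).const_mul 4).mul (hp 5 x))
  erw [h.fderiv]
  simp [ContinuousLinearMap.smul_apply, smul_eq_mul]
  ring

lemma d3 (x v : Fin 9 → ℝ) :
    fderiv ℝ I₃ x v =
      v 0 * x 4 * x 8 + x 0 * v 4 * x 8 + x 0 * x 4 * v 8
      - (v 3 * x 7 * x 7 + 2 * x 3 * x 7 * v 7)
      - (v 5 * x 6 * x 6 + 2 * x 5 * x 6 * v 6)
      + (v 4 * x 6 * x 7 + x 4 * v 6 * x 7 + x 4 * x 6 * v 7)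
      + 2 * v 8 * (x 1 * x 5 - x 2 * x 3)
      + 2 * x 8 * (v 1 * x 5 + x 1 * v 5 - v 2 * x 3 - x 2 * v 3) := by
  have hfun : I₃ = fun x : Fin 9 → ℝ =>
      x 0 * x 4 * x 8 - x 3 * (x 7 * x 7) - x 5 * (x 6 * x 6) + x 4 * x 6 * x 7
        + (2 * x 8) * (x 1 * x 5 - x 2 * x 3) := by
    funext y; simp [I₃]; ring
  rw [hfun]
  have h := ((((((hp 0 x).mul (hp 4 x)).mul (hp 8 x)).sub
      ((hp 3 x).mul ((hp 7 x).mul (hp 7 x)))).sub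
      ((hp 5 x).mul ((hp 6 x).mul (hp 6 x)))).add
      (((hp 4 x).mul (hp 6 x)).mul (hp 7 x))).add
      ((((hp 8 x).const_mul 2)).mul (((hp 1 x).mul (hp 5 x)).sub ((hp 2 x).mul (hp 3 x))))
  erw [h.fderiv]
  simp [ContinuousLinearMap.smul_apply, smul_eq_mul]
  ring

lemma sum9 (f : Fin 9 → ℝ) :
    ∑ j : Fin 9, f j = f 0 + f 1 + f 2 + f 3 + f 4 + f 5 + f 6 + f 7 + f 8 := by
  rw [Fin.sum_univ_castSucc (n := 8) f, Fin.sum_univ_eight]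
  rfl

set_option maxHeartbeats 2000000 in
lemma case0 (x : Fin 9 → ℝ) :
    Xhat C 0 I₁ x = 0 ∧ Xhat C 0 I₂ x = 0 ∧ Xhat C 0 I₃ x = 0 := by
  refine ⟨?_, ?_, ?_⟩ <;>
  · simp only [Xhat, sum9, d1, d2, d3]
    simp (config := { decide := true }) only [C, Lhalf, Pi.single_apply]
    norm_num
    try ring

set_option maxHeartbeats 2000000 in
lemma case1 (x : Fin 9 → ℝ) :
    Xhat C 1 I₁ x = 0 ∧ Xhat C 1 I₂ x = 0 ∧ Xhat C 1 I₃ x = 0 := by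
  refine ⟨?_, ?_, ?_⟩ <;>
  · simp only [Xhat, sum9, d1, d2, d3]
    simp (config := { decide := true }) only [C, Lhalf, Pi.single_apply]
    norm_num
    try ring

set_option maxHeartbeats 2000000 in
lemma case2 (x : Fin 9 → ℝ) :
    Xhat C 2 I₁ x = 0 ∧ Xhat C 2 I₂ x = 0 ∧ Xhat C 2 I₃ x = 0 := by
  refine ⟨?_, ?_, ?_⟩ <;>
  · simp only [Xhat, sum9, d1, d2, d3]
    simp (config := { decide := true }) only [C, Lhalf, Pi.single_apply]
    norm_num
    try ring

set_option maxHeartbeats 2000000 in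
lemma case3 (x : Fin 9 → ℝ) :
    Xhat C 3 I₁ x = 0 ∧ Xhat C 3 I₂ x = 0 ∧ Xhat C 3 I₃ x = 0 := by
  refine ⟨?_, ?_, ?_⟩ <;>
  · simp only [Xhat, sum9, d1, d2, d3]
    simp (config := { decide := true }) only [C, Lhalf, Pi.single_apply]
    norm_num
    try ring

set_option maxHeartbeats 2000000 in
lemma case4 (x : Fin 9 → ℝ) :
    Xhat C 4 I₁ x = 0 ∧ Xhat C 4 I₂ x = 0 ∧ Xhat C 4 I₃ x = 0 := by
  refine ⟨?_, ?_, ?_⟩ <;>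
  · simp only [Xhat, sum9, d1, d2, d3]
    simp (config := { decide := true }) only [C, Lhalf, Pi.single_apply]
    norm_num
    try ring

set_option maxHeartbeats 2000000 in
lemma case5 (x : Fin 9 → ℝ) :
    Xhat C 5 I₁ x = 0 ∧ Xhat C 5 I₂ x = 0 ∧ Xhat C 5 I₃ x = 0 := by
  refine ⟨?_, ?_, ?_⟩ <;>
  · simp only [Xhat, sum9, d1, d2, d3]
    simp (config := { decide := true }) only [C, Lhalf, Pi.single_apply]
    norm_num
    try ring

set_option maxHeartbeats 2000000 in
lemma case6 (x : Fin 9 → ℝ) :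
    Xhat C 6 I₁ x = 0 ∧ Xhat C 6 I₂ x = 0 ∧ Xhat C 6 I₃ x = 0 := by
  refine ⟨?_, ?_, ?_⟩ <;>
  · simp only [Xhat, sum9, d1, d2, d3]
    simp (config := { decide := true }) only [C, Lhalf, Pi.single_apply]
    norm_num
    try ring

set_option maxHeartbeats 2000000 in
lemma case7 (x : Fin 9 → ℝ) :
    Xhat C 7 I₁ x = 0 ∧ Xhat C 7 I₂ x = 0 ∧ Xhat C 7 I₃ x = 0 := by
  refine ⟨?_, ?_, ?_⟩ <;>
  · simp only [Xhat, sum9, d1, d2, d3]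
    simp (config := { decide := true }) only [C, Lhalf, Pi.single_apply]
    norm_num
    try ring

set_option maxHeartbeats 2000000 in
lemma case8 (x : Fin 9 → ℝ) :
    Xhat C 8 I₁ x = 0 ∧ Xhat C 8 I₂ x = 0 ∧ Xhat C 8 I₃ x = 0 := by
  refine ⟨?_, ?_, ?_⟩ <;>
  · simp only [Xhat, sum9, d1, d2, d3]
    simp (config := { decide := true }) only [C, Lhalf, Pi.single_apply]
    norm_num
    try ring

theorem invariants_L9_58 :
    ∀ (i : Fin 9) (x : Fin 9 → ℝ),
      Xhat C i I₁ x = 0 ∧ Xhat C i I₂ x = 0 ∧ Xhat C i I₃ x = 0 := by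
  intro i x
  fin_cases i
  exacts [case0 x, case1 x, case2 x, case3 x, case4 x, case5 x, case6 x, case7 x, case8 x]
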